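/- arXiv:2505.08296 — 3 statements merged into one kernel-verified Lean document; each statement's English description precedes it below -/
import Mathlib

section
/- For every integer n ≥ 1, the polynomial a_2(n) := (t0-1)(t1-1)·(2n - (t0 t1 + 1)·a_1(n))/(t0 t1 - 1) - a_1(n), where a_1(n) = Σ_{k=0}^{n-1}(t0 t1)^k, is a nonzero element of Z[t0, t1] whose span equals 2. -/
noncomputable section

open MvPolynomial Finset

/-- The polynomial ring `ℤ[t0, t1]`. -/
abbrev R2 : Type := MvPolynomial (Fin 2) ℤ

def t0 : R2 := X 0
def t1 : R2 := X 1

/-- The span of a nonzero two-variable polynomial `P = Σ a_{ij} t0^i t1^j`: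
`max {i - j : a_{ij} ≠ 0} - min {i - j : a_{ij} ≠ 0}` (and `0` for `P = 0`). -/
def span (P : R2) : ℤ :=
  if h : P.support.Nonempty then
    P.support.sup' h (fun p => (p 0 : ℤ) - (p 1 : ℤ))
      - P.support.inf' h (fun p => (p 0 : ℤ) - (p 1 : ℤ))
  else 0

/-- The geometric sum `a₁(n) = Σ_{k=0}^{n-1} (t0 t1)^k`. -/
def a1 (n : ℕ) : R2 := ∑ k ∈ range n, (t0 * t1) ^ k

/-- coefficients -/
def cc (n j : ℕ) : ℤ := 2 * (n : ℤ) - 1 - 2 * (j : ℤ)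

def sE (a b : ℕ) : Fin 2 →₀ ℕ := Finsupp.single 0 a + Finsupp.single 1 b

lemma sE_apply0 (a b : ℕ) : sE a b 0 = a := by
  simp [sE, Finsupp.single_apply]

lemma sE_apply1 (a b : ℕ) : sE a b 1 = b := by
  simp [sE, Finsupp.single_apply]

lemma sE_eq_iff {a b a' b' : ℕ} : sE a b = sE a' b' ↔ a = a' ∧ b = b' := by
  constructor
  · intro h
    constructor
    · have := DFunLike.congr_fun h (0 : Fin 2)
      simpa [sE_apply0] using this
    · have := DFunLike.congr_fun h (1 : Fin 2)
      simpa [sE_apply1] using this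
  · rintro ⟨rfl, rfl⟩; rfl

lemma tmon (a b : ℕ) : t0 ^ a * t1 ^ b = monomial (sE a b) 1 := by
  rw [t0, t1, X_pow_eq_monomial, X_pow_eq_monomial, monomial_mul, one_mul, sE]

lemma mon_eq (a b : ℕ) (c : ℤ) : monomial (sE a b) c = C c * (t0 ^ a * t1 ^ b) := by
  rw [tmon, C_mul_monomial, mul_one]

def QQ (n : ℕ) : R2 := -∑ j ∈ range n, C (cc n j) * (t0 * t1) ^ j

def DD (n : ℕ) : R2 :=
  ∑ j ∈ range n,
    (monomial (sE (j+1) j) (cc n j) + monomial (sE j (j+1)) (cc n j)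
      - monomial (sE (j+1) (j+1)) (cc n j) - monomial (sE j j) (cc n j + 1))

lemma Qeq (n : ℕ) : ∑ j ∈ range n, C (cc n j) * (t0 * t1) ^ j
    = ∑ k ∈ range n, (a1 k + a1 (k + 1)) := by
  induction n with
  | zero => simp
  | succ n ih =>
    have h1 : ∀ j : ℕ, cc (n + 1) j = cc n j + 2 := by
      intro j; simp [cc]; ring
    have h2 : cc (n + 1) n = 1 := by simp [cc]; ring
    rw [sum_range_succ, sum_range_succ, h2]
    have h3 : ∑ j ∈ range n, C (cc (n+1) j) * (t0 * t1) ^ j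
        = ∑ j ∈ range n, C (cc n j) * (t0 * t1) ^ j + 2 * a1 n := by
      rw [a1, Finset.mul_sum, ← Finset.sum_add_distrib]
      refine Finset.sum_congr rfl fun j _ => ?_
      rw [h1 j, map_add]
      have hC2 : (C 2 : R2) = 2 := by simp [map_ofNat]
      rw [hC2]; ring
    rw [h3, ih, C_1, one_mul]
    have h4 : a1 (n + 1) = a1 n + (t0 * t1) ^ n := by
      rw [a1, a1, sum_range_succ]
    rw [h4]
    ring

lemma QQ_mul (n : ℕ) : (t0 * t1 - 1) * QQ n
    = (2 * n : ℤ) • (1 : R2) - (t0 * t1 + 1) * a1 n := by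
  rw [QQ, Qeq, mul_neg]
  have key : (t0 * t1 - 1) * ∑ k ∈ range n, (a1 k + a1 (k + 1))
      = (t0 * t1 + 1) * a1 n - (2 * n : ℤ) • (1 : R2) := by
    rw [Finset.mul_sum]
    have h1 : ∀ k : ℕ, (t0 * t1 - 1) * (a1 k + a1 (k + 1))
        = ((t0 * t1) ^ k - 1) + ((t0 * t1) ^ (k + 1) - 1) := by
      intro k
      rw [mul_add]
      have g := geom_sum_mul (t0 * t1) k
      have g' := geom_sum_mul (t0 * t1) (k + 1)
      rw [a1, a1]
      rw [mul_comm] at g g'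
      rw [g, g']
    rw [Finset.sum_congr rfl fun k _ => h1 k]
    rw [Finset.sum_add_distrib, Finset.sum_sub_distrib, Finset.sum_sub_distrib]
    have h2 : ∑ k ∈ range n, (t0 * t1) ^ (k + 1) = (t0 * t1) * a1 n := by
      rw [a1, Finset.mul_sum]
      exact Finset.sum_congr rfl fun k _ => by rw [pow_succ']
    rw [h2, Finset.sum_const, card_range, ← a1]
    rw [zsmul_eq_mul, nsmul_eq_mul]
    push_cast
    ring
  rw [key]
  ring

lemma DD_eq (n : ℕ) : (t0 - 1) * (t1 - 1) * QQ n - a1 n = DD n := by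
  rw [QQ, a1, DD, mul_neg, ← neg_mul, Finset.mul_sum, ← Finset.sum_sub_distrib]
  refine Finset.sum_congr rfl fun j _ => ?_
  rw [mon_eq, mon_eq, mon_eq, mon_eq, map_add, C_1]
  ring

lemma coeff_DD (n : ℕ) (d : Fin 2 →₀ ℕ) :
    coeff d (DD n) = ∑ j ∈ range n,
      ((if sE (j+1) j = d then cc n j else 0) + (if sE j (j+1) = d then cc n j else 0)
        - (if sE (j+1) (j+1) = d then cc n j else 0) - (if sE j j = d then cc n j + 1 else 0)) := by
  rw [DD, coeff_sum]
  refine Finset.sum_congr rfl fun j _ => ?_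
  simp only [coeff_sub, coeff_add, coeff_monomial]

lemma coeff_DD_10 (n : ℕ) (hn : 1 ≤ n) : coeff (sE 1 0) (DD n) = 2 * (n : ℤ) - 1 := by
  rw [coeff_DD]
  have : ∀ j ∈ range n,
      ((if sE (j+1) j = sE 1 0 then cc n j else 0) + (if sE j (j+1) = sE 1 0 then cc n j else 0)
        - (if sE (j+1) (j+1) = sE 1 0 then cc n j else 0) - (if sE j j = sE 1 0 then cc n j + 1 else 0))
      = if j = 0 then cc n j else 0 := by
    intro j _
    simp only [sE_eq_iff]
    by_cases hj : j = 0
    · subst hj; simp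
    · simp [hj]
  rw [Finset.sum_congr rfl this, Finset.sum_ite_eq']
  have h0 : 0 ∈ range n := mem_range.mpr hn
  simp [h0, cc]

lemma coeff_DD_01 (n : ℕ) (hn : 1 ≤ n) : coeff (sE 0 1) (DD n) = 2 * (n : ℤ) - 1 := by
  rw [coeff_DD]
  have : ∀ j ∈ range n,
      ((if sE (j+1) j = sE 0 1 then cc n j else 0) + (if sE j (j+1) = sE 0 1 then cc n j else 0)
        - (if sE (j+1) (j+1) = sE 0 1 then cc n j else 0) - (if sE j j = sE 0 1 then cc n j + 1 else 0))
      = if j = 0 then cc n j else 0 := by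
    intro j _
    simp only [sE_eq_iff]
    by_cases hj : j = 0
    · subst hj; simp
    · simp [hj]
  rw [Finset.sum_congr rfl this, Finset.sum_ite_eq']
  have h0 : 0 ∈ range n := mem_range.mpr hn
  simp [h0, cc]

lemma support_DD_bound (n : ℕ) (d : Fin 2 →₀ ℕ) (hd : d ∈ (DD n).support) :
    d 0 ≤ d 1 + 1 ∧ d 1 ≤ d 0 + 1 := by
  rw [mem_support_iff, coeff_DD] at hd
  obtain ⟨j, -, hj⟩ : ∃ j ∈ range n,
      ((if sE (j+1) j = d then cc n j else 0) + (if sE j (j+1) = d then cc n j else 0)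
        - (if sE (j+1) (j+1) = d then cc n j else 0) - (if sE j j = d then cc n j + 1 else 0)) ≠ 0 := by
    by_contra h
    push_neg at h
    exact hd (Finset.sum_eq_zero h)
  by_cases h1 : sE (j+1) j = d
  · rw [← h1]; simp only [sE_apply0, sE_apply1]; omega
  by_cases h2 : sE j (j+1) = d
  · rw [← h2]; simp only [sE_apply0, sE_apply1]; omega
  by_cases h3 : sE (j+1) (j+1) = d
  · rw [← h3]; simp only [sE_apply0, sE_apply1]; omega
  by_cases h4 : sE j j = d
  · rw [← h4]; simp only [sE_apply0, sE_apply1]; omega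
  · simp [h1, h2, h3, h4] at hj

lemma cc_ne (n : ℕ) (_hn : 1 ≤ n) : 2 * (n : ℤ) - 1 ≠ 0 := by omega

lemma DD_ne (n : ℕ) (hn : 1 ≤ n) : DD n ≠ 0 := by
  intro h
  have := coeff_DD_10 n hn
  rw [h, coeff_zero] at this
  exact cc_ne n hn this.symm

lemma span_DD (n : ℕ) (hn : 1 ≤ n) : span (DD n) = 2 := by
  have hmem10 : sE 1 0 ∈ (DD n).support := by
    rw [mem_support_iff, coeff_DD_10 n hn]
    exact cc_ne n hn
  have hmem01 : sE 0 1 ∈ (DD n).support := by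
    rw [mem_support_iff, coeff_DD_01 n hn]
    exact cc_ne n hn
  have h : (DD n).support.Nonempty := ⟨_, hmem10⟩
  rw [span, dif_pos h]
  have hsup : (DD n).support.sup' h (fun p => (p 0 : ℤ) - (p 1 : ℤ)) = 1 := by
    apply le_antisymm
    · apply Finset.sup'_le
      intro d hd
      have := support_DD_bound n d hd
      omega
    · have := Finset.le_sup' (fun p : Fin 2 →₀ ℕ => (p 0 : ℤ) - (p 1 : ℤ)) hmem10
      simpa only [sE_apply0, sE_apply1, Nat.cast_one, Nat.cast_zero, sub_zero, zero_sub] using this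
  have hinf : (DD n).support.inf' h (fun p => (p 0 : ℤ) - (p 1 : ℤ)) = -1 := by
    apply le_antisymm
    · have := Finset.inf'_le (fun p : Fin 2 →₀ ℕ => (p 0 : ℤ) - (p 1 : ℤ)) hmem01
      simpa only [sE_apply0, sE_apply1, Nat.cast_one, Nat.cast_zero, sub_zero, zero_sub] using this
    · apply Finset.le_inf'
      intro d hd
      have := support_DD_bound n d hd
      omega
  rw [hsup, hinf]
  ring

/-- For `n ≥ 1`, with `Q` the (unique) quotient of `2n - (t0·t1 + 1)·a₁(n)` by
`t0·t1 - 1`, the polynomial `a₂(n) = (t0-1)(t1-1)·Q - a₁(n)` is nonzero of span `2`. -/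
theorem a2_span (n : ℕ) (hn : 1 ≤ n) :
    ∃ Q : R2, (t0 * t1 - 1) * Q = (2 * n : ℤ) • (1 : R2) - (t0 * t1 + 1) * a1 n ∧
      (t0 - 1) * (t1 - 1) * Q - a1 n ≠ 0 ∧
      span ((t0 - 1) * (t1 - 1) * Q - a1 n) = 2 := by
  refine ⟨QQ n, QQ_mul n, ?_, ?_⟩
  · rw [DD_eq]; exact DD_ne n hn
  · rw [DD_eq]; exact span_DD n hn
end
end

section
/- For every natural number n, the polynomial N_x(n) := (-1)^n (t0 - t1) + t0^n (t1 + 1) - t1^n (t0 + 1) is divisible by (t0 + 1)(t1 + 1)(t0 - t1) in Z[t0, t1]. -/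
noncomputable section

open MvPolynomial Finset

/-- The numerator `N_x(n) = (-1)^n (t0 - t1) + t0^n (t1 + 1) - t1^n (t0 + 1)` of the
skein coefficient `x(n)` is divisible by `(t0 + 1)(t1 + 1)(t0 - t1)` in `ℤ[t0, t1]`. -/
theorem dvd_Nx (n : ℕ) :
    (t0 + 1) * (t1 + 1) * (t0 - t1) ∣
      ((-1 : R2) ^ n * (t0 - t1) + t0 ^ n * (t1 + 1) - t1 ^ n * (t0 + 1)) := by

  induction n using Nat.strong_induction_on with
  | _ n ih =>
    match n with
    | 0 =>
      have : ((-1 : R2) ^ 0 * (t0 - t1) + t0 ^ 0 * (t1 + 1) - t1 ^ 0 * (t0 + 1)) = 0 := by ring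
      rw [this]; exact dvd_zero _
    | 1 =>
      have : ((-1 : R2) ^ 1 * (t0 - t1) + t0 ^ 1 * (t1 + 1) - t1 ^ 1 * (t0 + 1)) = 0 := by
        ring
      rw [this]; exact dvd_zero _
    | 2 =>
      exact ⟨1, by ring⟩
    | (m + 3) =>
      obtain ⟨a, ha⟩ := ih m (by omega)
      obtain ⟨b, hb⟩ := ih (m + 1) (by omega)
      obtain ⟨c, hc⟩ := ih (m + 2) (by omega)
      refine ⟨(t0 + t1 - 1) * c + (t0 + t1 - t0 * t1) * b - t0 * t1 * a, ?_⟩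
      have key : ((-1 : R2) ^ (m + 3) * (t0 - t1) + t0 ^ (m + 3) * (t1 + 1) - t1 ^ (m + 3) * (t0 + 1))
          = (t0 + t1 - 1) * ((-1 : R2) ^ (m + 2) * (t0 - t1) + t0 ^ (m + 2) * (t1 + 1) - t1 ^ (m + 2) * (t0 + 1))
          + (t0 + t1 - t0 * t1) * ((-1 : R2) ^ (m + 1) * (t0 - t1) + t0 ^ (m + 1) * (t1 + 1) - t1 ^ (m + 1) * (t0 + 1))
          - t0 * t1 * ((-1 : R2) ^ m * (t0 - t1) + t0 ^ m * (t1 + 1) - t1 ^ m * (t0 + 1)) := by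
        ring
      rw [key, ha, hb, hc]
      ring
end
end

section
/- For every odd integer r ≥ 5, the polynomial N(r) := (t0 - t1)(t0 t1 + 1) - t0^{r-1}(t1 - 1)(t1 + 1) + t1^{r-1}(t0 - 1)(t0 + 1) is divisible by (t0 + 1)(t1 + 1)(t0 - t1) in Z[t0, t1], and the quotient polynomial has span equal to 2r - 6. -/
noncomputable section

open MvPolynomial Finset

/-! ### Auxiliary definitions and lemmas -/

def e2 (i j : ℕ) : Fin 2 →₀ ℕ := Finsupp.single 0 i + Finsupp.single 1 j

lemma e2_apply0 (i j : ℕ) : e2 i j 0 = i := by simp [e2, Finsupp.single_apply]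

lemma e2_apply1 (i j : ℕ) : e2 i j 1 = j := by simp [e2, Finsupp.single_apply]

lemma eq_e2 (p : Fin 2 →₀ ℕ) : p = e2 (p 0) (p 1) := by
  ext a; fin_cases a <;> simp [e2, Finsupp.single_apply]

lemma monomial_xy (i j : ℕ) : t0 ^ i * t1 ^ j = monomial (e2 i j) (1 : ℤ) := by
  rw [t0, t1, X_pow_eq_monomial, X_pow_eq_monomial, monomial_mul, one_mul, e2]

def Gp (a : R2) (m : ℕ) : R2 := ∑ k ∈ range m, (-a) ^ k

lemma one_add_mul_Gp (a : R2) (m : ℕ) : (1 + a) * Gp a m = 1 - (-a) ^ m := by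
  have h := geom_sum_mul (-a) m
  unfold Gp
  linear_combination -h

def hk (k : ℕ) : R2 := ∑ i ∈ range (k + 1), t0 ^ i * t1 ^ (k - i)

lemma hk_mul (k : ℕ) : hk k * (t0 - t1) = t0 ^ (k + 1) - t1 ^ (k + 1) := by
  have h := geom_sum₂_mul t0 t1 (k + 1)
  simpa [hk] using h

def Sal (m : ℕ) : R2 := ∑ k ∈ range m, (-1 : R2) ^ k * hk k

lemma Sal_mul (m : ℕ) : Sal m * (t0 - t1) = t0 * Gp t0 m - t1 * Gp t1 m := by
  unfold Sal Gp
  rw [Finset.sum_mul, Finset.mul_sum, Finset.mul_sum, ← Finset.sum_sub_distrib]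
  refine Finset.sum_congr rfl fun k _ => ?_
  rw [mul_assoc, hk_mul, neg_pow, neg_pow]
  ring

lemma key_identity (n : ℕ) (hn : Even n) :
    (t0 - t1) * (t0 * t1 + 1) - t0 ^ (n + 2) * (t1 - 1) * (t1 + 1)
      + t1 ^ (n + 2) * (t0 - 1) * (t0 + 1)
    = (t0 + 1) * (t1 + 1) * (t0 - t1) * (Sal (n + 1) + t0 * t1 * Sal n) := by
  have e1 := Sal_mul (n + 1)
  have e2 := Sal_mul n
  have h1 := one_add_mul_Gp t0 (n + 1)
  have h2 := one_add_mul_Gp t1 (n + 1)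
  have h3 := one_add_mul_Gp t0 n
  have h4 := one_add_mul_Gp t1 n
  rw [Odd.neg_pow hn.add_one] at h1 h2
  rw [Even.neg_pow hn] at h3 h4
  linear_combination (-(t0 + 1) * (t1 + 1)) * e1 + (-t0 * t1 * (t0 + 1) * (t1 + 1)) * e2
    + (-t0 * (t1 + 1)) * h1 + (t1 * (t0 + 1)) * h2
    + (-t0 ^ 2 * t1 * (t1 + 1)) * h3 + (t0 * t1 ^ 2 * (t0 + 1)) * h4

lemma coeff_hk (k i j : ℕ) : coeff (e2 i j) (hk k) = if i + j = k then 1 else 0 := by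
  unfold hk
  rw [coeff_sum]
  simp_rw [monomial_xy, coeff_monomial]
  have key : ∀ l, e2 l (k - l) = e2 i j → l = i ∧ k - l = j := by
    intro l he
    constructor
    · rw [← e2_apply0 l (k - l), he, e2_apply0]
    · rw [← e2_apply1 l (k - l), he, e2_apply1]
  by_cases h : i + j = k
  · rw [if_pos h, Finset.sum_eq_single i]
    · rw [if_pos]; congr 1; omega
    · intro b _ hb
      rw [if_neg]; intro he; exact hb (key b he).1
    · intro hi
      exact absurd (Finset.mem_range.mpr (by omega)) hi
  · rw [if_neg h]
    refine Finset.sum_eq_zero fun l hl => ?_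
    rw [if_neg]
    intro he
    obtain ⟨h0, h1⟩ := key l he
    simp only [Finset.mem_range] at hl
    omega

lemma coeff_Sal (m i j : ℕ) :
    coeff (e2 i j) (Sal m) = if i + j < m then (-1 : ℤ) ^ (i + j) else 0 := by
  unfold Sal
  rw [coeff_sum]
  have h : ∀ k, coeff (e2 i j) ((-1 : R2) ^ k * hk k)
      = if k = i + j then (-1 : ℤ) ^ (i + j) else 0 := by
    intro k
    have hc : ((-1 : R2)) ^ k = C ((-1 : ℤ) ^ k) := by
      rw [map_pow, map_neg, map_one]
    rw [hc, coeff_C_mul, coeff_hk]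
    by_cases h : i + j = k
    · rw [if_pos h, if_pos h.symm, h, mul_one]
    · rw [if_neg h, if_neg (fun hh => h hh.symm), mul_zero]
  simp_rw [h]
  rw [Finset.sum_ite_eq' (range m) (i + j) (fun _ => (-1 : ℤ) ^ (i + j))]
  simp [Finset.mem_range]

lemma coeff_xy_mul (P : R2) (i j : ℕ) :
    coeff (e2 i j) (t0 * t1 * P)
      = if 1 ≤ i ∧ 1 ≤ j then coeff (e2 (i - 1) (j - 1)) P else 0 := by
  rw [mul_assoc, t0, coeff_X_mul', t1]
  by_cases hi : 1 ≤ i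
  · rw [if_pos]
    · rw [coeff_X_mul']
      by_cases hj : 1 ≤ j
      · rw [if_pos, if_pos ⟨hi, hj⟩]
        · congr 1
          ext a
          fin_cases a <;>
            simp [e2, Finsupp.single_apply, Finsupp.tsub_apply] <;> omega
        · have hval : ((e2 i j - Finsupp.single 0 1 : Fin 2 →₀ ℕ)) 1 = j := by
            simp [e2, Finsupp.single_apply, Finsupp.tsub_apply]
          simp only [Finsupp.mem_support_iff, hval]
          omega
      · have hval : ((e2 i j - Finsupp.single 0 1 : Fin 2 →₀ ℕ)) 1 = j := by
          simp [e2, Finsupp.single_apply, Finsupp.tsub_apply]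
        rw [if_neg, if_neg (by omega)]
        simp only [Finsupp.mem_support_iff, ne_eq, not_not, hval]
        omega
    · simp only [Finsupp.mem_support_iff]
      rw [e2_apply0]; omega
  · rw [if_neg, if_neg (by omega)]
    simp only [Finsupp.mem_support_iff, ne_eq, not_not]
    rw [e2_apply0]; omega

/-- The quotient polynomial. -/
def Qpoly (n : ℕ) : R2 := Sal (n + 1) + t0 * t1 * Sal n

lemma coeff_Qpoly (n i j : ℕ) :
    coeff (e2 i j) (Qpoly n)
      = (if i + j ≤ n then (-1 : ℤ) ^ (i + j) else 0)
        + (if 1 ≤ i ∧ 1 ≤ j ∧ i + j ≤ n + 1 then (-1 : ℤ) ^ (i + j) else 0) := by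
  unfold Qpoly
  rw [coeff_add, coeff_Sal, coeff_xy_mul]
  congr 1
  · congr 1
    simp only [eq_iff_iff]
    omega
  · by_cases h : 1 ≤ i ∧ 1 ≤ j
    · rw [if_pos h, coeff_Sal]
      by_cases h2 : i - 1 + (j - 1) < n
      · rw [if_pos h2, if_pos ⟨h.1, h.2, by omega⟩]
        have : i - 1 + (j - 1) + 2 = i + j := by omega
        calc (-1 : ℤ) ^ (i - 1 + (j - 1)) = (-1 : ℤ) ^ (i - 1 + (j - 1)) * (-1) ^ 2 := by ring
          _ = (-1 : ℤ) ^ (i + j) := by rw [← pow_add, this]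
      · rw [if_neg h2, if_neg (by omega)]
    · rw [if_neg h, if_neg (by omega)]

lemma mem_support_Qpoly (n i j : ℕ) :
    e2 i j ∈ (Qpoly n).support ↔ (i + j ≤ n ∨ (1 ≤ i ∧ 1 ≤ j ∧ i + j ≤ n + 1)) := by
  rw [mem_support_iff, coeff_Qpoly]
  have hs : ((-1 : ℤ) ^ (i + j)) ≠ 0 := by positivity
  constructor
  · intro h
    by_contra hc
    rw [not_or] at hc
    rw [if_neg hc.1, if_neg hc.2] at h
    exact h (by ring)
  · intro h hc
    split_ifs at hc with h1 h2 h2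
    · rcases Nat.even_or_odd (i + j) with he | he
      · rw [Even.neg_one_pow he] at hc; norm_num at hc
      · rw [Odd.neg_one_pow he] at hc; norm_num at hc
    · rw [add_zero] at hc; exact hs hc
    · rw [zero_add] at hc; exact hs hc
    · tauto

lemma span_Qpoly (n : ℕ) : span (Qpoly n) = 2 * (n : ℤ) := by
  have hmem : e2 n 0 ∈ (Qpoly n).support := (mem_support_Qpoly n n 0).mpr (Or.inl (by omega))
  have hmem' : e2 0 n ∈ (Qpoly n).support := (mem_support_Qpoly n 0 n).mpr (Or.inl (by omega))
  have hne : (Qpoly n).support.Nonempty := ⟨_, hmem⟩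
  rw [span, dif_pos hne]
  have hbound : ∀ p ∈ (Qpoly n).support,
      ((p 0 : ℤ) - (p 1 : ℤ)) ≤ n ∧ -(n : ℤ) ≤ ((p 0 : ℤ) - (p 1 : ℤ)) := by
    intro p hp
    rw [eq_e2 p, mem_support_Qpoly] at hp
    have h0 := e2_apply0 (p 0) (p 1)
    rcases hp with h | ⟨h1, h2, h3⟩ <;>
      constructor <;> [skip; skip; skip; skip] <;> push_cast <;> omega
  have hsup : (Qpoly n).support.sup' hne (fun p => (p 0 : ℤ) - (p 1 : ℤ)) = n := by
    apply le_antisymm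
    · exact Finset.sup'_le _ _ fun p hp => (hbound p hp).1
    · have := Finset.le_sup' (fun p : Fin 2 →₀ ℕ => (p 0 : ℤ) - (p 1 : ℤ)) hmem
      rwa [e2_apply0, e2_apply1] at this
      
  have hinf : (Qpoly n).support.inf' hne (fun p => (p 0 : ℤ) - (p 1 : ℤ)) = -(n : ℤ) := by
    apply le_antisymm
    · have := Finset.inf'_le (fun p : Fin 2 →₀ ℕ => (p 0 : ℤ) - (p 1 : ℤ)) hmem'
      rw [e2_apply0, e2_apply1] at this
      simpa only [Nat.cast_zero, zero_sub] using this
    · exact Finset.le_inf' _ _ fun p hp => (hbound p hp).2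
  rw [hsup, hinf]
  ring

/-- For odd `r ≥ 5`, the polynomial
`N(r) = (t0 - t1)(t0 t1 + 1) - t0^(r-1)(t1-1)(t1+1) + t1^(r-1)(t0-1)(t0+1)`
is divisible by `(t0+1)(t1+1)(t0-t1)`, and the quotient (the Links-Gould invariant of the
pretzel knot `K(2,-1,r)`) has span `2r - 6`. -/
theorem pretzel_2_neg1_r (r : ℕ) (hodd : Odd r) (hr : 5 ≤ r) :
    ∃ Q : R2,
      (t0 - t1) * (t0 * t1 + 1) - t0 ^ (r - 1) * (t1 - 1) * (t1 + 1)
          + t1 ^ (r - 1) * (t0 - 1) * (t0 + 1)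
        = (t0 + 1) * (t1 + 1) * (t0 - t1) * Q ∧
      span Q = 2 * (r : ℤ) - 6 := by
  obtain ⟨m, hm⟩ := hodd
  set n : ℕ := r - 3 with hn
  have hrn : r - 1 = n + 2 := by omega
  have heven : Even n := ⟨m - 1, by omega⟩
  refine ⟨Qpoly n, ?_, ?_⟩
  · rw [hrn]
    exact key_identity n heven
  · rw [span_Qpoly]
    have : (n : ℤ) = (r : ℤ) - 3 := by
      rw [hn]; push_cast [Nat.cast_sub (by omega : 3 ≤ r)]; ring
    rw [this]; ring
end
end
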